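/- Let σ_n > 0 with σ_n → 0, and let T_n = [[V, σ_n E],[0, U]] on H = H₁ ⊕ H₂, where V ∈ B(H₁), E ∈ B(H₂,H₁) are isometries with ran(V) ⊕ ran(E) = H₁ and U ∈ B(H₂) unitary. Then T_n converges in operator norm to V ⊕ U, which is a non-unitary isometry whenever V is non-unitary or E ≠ 0; in particular the norm limit of Brownian unitaries of positive covariance can fail to be a Brownian unitary. -/

import Mathlib

open ContinuousLinearMap Filter

/-- The covariance of a bounded operator `T` on a complex Hilbert space:
`cov T = √‖T*T − I‖`. -/
noncomputable def cov {H : Type*} [NormedAddCommGroup H] [InnerProductSpace ℂ H]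
    [CompleteSpace H] (T : H →L[ℂ] H) : ℝ :=
  Real.sqrt ‖adjoint T ∘L T - 1‖
open scoped InnerProductSpace in
/-- Brownian unitaries of covariance σₙ → 0 converge in norm to the (non-unitary when
E ≠ 0) isometry V ⊕ U. -/
theorem brownian_norm_limit_nonunitary_isometry {H₁ H₂ : Type*}
    [NormedAddCommGroup H₁] [InnerProductSpace ℂ H₁] [CompleteSpace H₁]
    [NormedAddCommGroup H₂] [InnerProductSpace ℂ H₂] [CompleteSpace H₂] [Nontrivial H₂]
    (V : H₁ →L[ℂ] H₁) (E : H₂ →L[ℂ] H₁) (U : H₂ →L[ℂ] H₂)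
    (hV : ∀ x : H₁, ‖V x‖ = ‖x‖) (hE : ∀ y : H₂, ‖E y‖ = ‖y‖)
    (horth : ∀ (x : H₁) (y : H₂), ⟪V x, E y⟫_ℂ = 0)
    (hspan : ∀ z : H₁, ∃ (x : H₁) (y : H₂), z = V x + E y)
    (hU1 : adjoint U ∘L U = 1) (hU2 : U ∘L adjoint U = 1)
    (σ : ℕ → ℝ) (hσpos : ∀ n, 0 < σ n) (hσlim : Filter.Tendsto σ Filter.atTop (nhds 0))
    (T : ℕ → WithLp 2 (H₁ × H₂) →L[ℂ] WithLp 2 (H₁ × H₂))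
    (hT : ∀ (n : ℕ) (x : H₁) (y : H₂),
      T n ((WithLp.equiv 2 (H₁ × H₂)).symm (x, y)) =
        (WithLp.equiv 2 (H₁ × H₂)).symm (V x + σ n • E y, U y))
    (S : WithLp 2 (H₁ × H₂) →L[ℂ] WithLp 2 (H₁ × H₂))
    (hS : ∀ (x : H₁) (y : H₂),
      S ((WithLp.equiv 2 (H₁ × H₂)).symm (x, y)) =
        (WithLp.equiv 2 (H₁ × H₂)).symm (V x, U y)) :
    (∀ n, ‖T n - S‖ = σ n) ∧
      Filter.Tendsto (fun n => ‖T n - S‖) Filter.atTop (nhds 0) ∧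
      (∀ h, ‖S h‖ = ‖h‖) ∧
      (E ≠ 0 → ¬ Function.Surjective S) := by
  have sqr_eq : ∀ a b : ℝ, 0 ≤ a → 0 ≤ b → a ^ 2 = b ^ 2 → a = b := fun a b ha hb h => by
    rw [← Real.sqrt_sq ha, ← Real.sqrt_sq hb, h]
  have sqr_le : ∀ a b : ℝ, 0 ≤ a → 0 ≤ b → a ^ 2 ≤ b ^ 2 → a ≤ b := fun a b ha hb h => by
    rw [← Real.sqrt_sq ha, ← Real.sqrt_sq hb]
    exact Real.sqrt_le_sqrt h
  -- U preserves norms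
  have hUid : ∀ y : H₂, adjoint U (U y) = y := fun y => by
    have := congrArg (fun A => A y) hU1
    simpa using this
  have hU : ∀ y : H₂, ‖U y‖ = ‖y‖ := by
    intro y
    have h1 : ⟪U y, U y⟫_ℂ = ⟪y, y⟫_ℂ := by
      rw [← adjoint_inner_left, hUid]
    rw [inner_self_eq_norm_sq_to_K, inner_self_eq_norm_sq_to_K] at h1
    have h2 : ‖U y‖ ^ 2 = ‖y‖ ^ 2 := by exact_mod_cast h1
    exact sqr_eq _ _ (norm_nonneg _) (norm_nonneg _) h2
  -- key: difference formula
  have hdiff : ∀ (n : ℕ) (h : WithLp 2 (H₁ × H₂)),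
      (T n - S) h = (WithLp.equiv 2 (H₁ × H₂)).symm (σ n • E h.snd, 0) := by
    intro n h
    have hh : h = (WithLp.equiv 2 (H₁ × H₂)).symm (h.fst, h.snd) := rfl
    rw [sub_apply, hh, hT, hS, WithLp.equiv_symm_apply, ← WithLp.toLp_sub]
    congr 1
    rw [Prod.mk_sub_mk, Prod.mk.injEq]
    refine ⟨?_, sub_self _⟩
    show V h.fst + σ n • E h.snd - V h.fst = σ n • E h.snd
    abel
  have hnormsq : ∀ (a : H₁) (b : H₂),
      ‖(WithLp.equiv 2 (H₁ × H₂)).symm (a, b)‖ ^ 2 = ‖a‖ ^ 2 + ‖b‖ ^ 2 := by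
    intro a b
    rw [WithLp.prod_norm_sq_eq_of_L2]
    rfl
  have hσnn : ∀ n, (0:ℝ) ≤ σ n := fun n => (hσpos n).le
  have key : ∀ n, ‖T n - S‖ = σ n := by
    intro n
    apply le_antisymm
    · apply opNorm_le_bound _ (hσnn n)
      intro h
      rw [hdiff]
      apply sqr_le _ _ (norm_nonneg _) (mul_nonneg (hσnn n) (norm_nonneg _))
      rw [hnormsq, mul_pow]
      have h2 : ‖h.snd‖ ^ 2 ≤ ‖h‖ ^ 2 := by
        rw [WithLp.prod_norm_sq_eq_of_L2]
        nlinarith [sq_nonneg ‖h.fst‖]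
      have h1 : ‖σ n • E h.snd‖ ^ 2 = (σ n) ^ 2 * ‖h.snd‖ ^ 2 := by
        rw [norm_smul, hE, mul_pow]
        simp [sq_abs]
      rw [h1]
      simp only [norm_zero]
      nlinarith [sq_nonneg (σ n), h2]
    · obtain ⟨y₀, hy₀⟩ := exists_ne (0 : H₂)
      have hnorm : ‖(WithLp.equiv 2 (H₁ × H₂)).symm ((0:H₁), y₀)‖ = ‖y₀‖ := by
        apply sqr_eq _ _ (norm_nonneg _) (norm_nonneg _)
        rw [hnormsq]
        simp
      have happ : ‖(T n - S) ((WithLp.equiv 2 (H₁ × H₂)).symm ((0:H₁), y₀))‖ = σ n * ‖y₀‖ := by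
        rw [hdiff]
        have hsnd : ((WithLp.equiv 2 (H₁ × H₂)).symm ((0:H₁), y₀)).snd = y₀ := rfl
        rw [hsnd]
        apply sqr_eq _ _ (norm_nonneg _) (mul_nonneg (hσnn n) (norm_nonneg _))
        rw [hnormsq, norm_smul, hE, mul_pow, mul_pow]
        simp [sq_abs]
      have hle := (T n - S).le_opNorm ((WithLp.equiv 2 (H₁ × H₂)).symm ((0:H₁), y₀))
      rw [happ, hnorm] at hle
      have hy₀' : 0 < ‖y₀‖ := norm_pos_iff.mpr hy₀
      exact le_of_mul_le_mul_right (by linarith) hy₀'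
  refine ⟨key, ?_, ?_, ?_⟩
  · simpa [key] using hσlim
  · intro h
    have hh : h = (WithLp.equiv 2 (H₁ × H₂)).symm (h.fst, h.snd) := rfl
    rw [hh, hS]
    apply sqr_eq _ _ (norm_nonneg _) (norm_nonneg _)
    rw [hnormsq, hnormsq, hV, hU]
  · intro hEne hsurj
    obtain ⟨y, hy⟩ : ∃ y, E y ≠ 0 := by
      by_contra hc
      push_neg at hc
      exact hEne (ContinuousLinearMap.ext fun y => hc y)
    obtain ⟨w, hw⟩ := hsurj ((WithLp.equiv 2 (H₁ × H₂)).symm (E y, 0))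
    have hw' : S ((WithLp.equiv 2 (H₁ × H₂)).symm (w.fst, w.snd)) =
        (WithLp.equiv 2 (H₁ × H₂)).symm (E y, 0) := hw
    rw [hS] at hw'
    have hpair : V w.fst = E y ∧ U w.snd = 0 := by
      have := (WithLp.equiv 2 (H₁ × H₂)).symm.injective hw'
      exact ⟨congrArg Prod.fst this, congrArg Prod.snd this⟩
    have : ⟪E y, E y⟫_ℂ = 0 := by
      have h0 := horth w.fst y
      rw [hpair.1] at h0
      exact h0
    exact hy (inner_self_eq_zero.mp this)
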